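/- arXiv:0909.3458 — 2 statements merged into one kernel-verified Lean document; each statement's English description precedes it below -/
import Mathlib

section
/- Let F : X → X be a bijection and G an involution with G ∘ F ∘ G = F⁻¹, and H = F ∘ G. For z ∈ X and s ∈ ℕ: (a) F^{2s}(G(z)) = z if and only if F^{-s}(z) is fixed by G; (b) F^{2s+1}(G(z)) = z if and only if F^{-s}(z) is fixed by H. -/
/-- Let `F` be a bijection, `G` an involution with `G ∘ F ∘ G = F⁻¹`, and `H = F ∘ G`.
(a) `F^{2s}(G(z)) = z` iff `F^{-s}(z)` is fixed by `G`;
(b) `F^{2s+1}(G(z)) = z` iff `F^{-s}(z)` is fixed by `H`. -/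
theorem stmt14 {X : Type*} (F : Equiv.Perm X) (G : X → X)
    (hG : ∀ x, G (G x) = x)
    (hrev : ∀ x, G (F (G x)) = F.symm x)
    (H : X → X) (hH : ∀ x, H x = F (G x))
    (z : X) (s : ℕ) :
    ((F ^ (2 * s)) (G z) = z ↔ G ((F⁻¹ ^ s) z) = (F⁻¹ ^ s) z) ∧
    ((F ^ (2 * s + 1)) (G z) = z ↔ H ((F⁻¹ ^ s) z) = (F⁻¹ ^ s) z) := by
  have hGF : ∀ x, G (F x) = F.symm (G x) := by
    intro x
    have := hrev (G x)
    rwa [hG] at this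
  have hpow : ∀ (n : ℕ) (x : X), G ((F ^ n) x) = (F⁻¹ ^ n) (G x) := by
    intro n
    induction n with
    | zero => simp
    | succ k ih =>
      intro x
      have h1 : (F ^ (k + 1)) x = (F ^ k) (F x) := by
        rw [pow_succ, Equiv.Perm.mul_apply]
      rw [h1, ih, pow_succ, Equiv.Perm.mul_apply]
      simp [Equiv.Perm.inv_def, ← hGF]
  have hkey : G ((F⁻¹ ^ s) z) = (F ^ s) (G z) := by
    calc G ((F⁻¹ ^ s) z) = G ((F⁻¹ ^ s) (G (G z))) := by rw [hG]
    _ = G (G ((F ^ s) (G z))) := by rw [hpow s (G z), hG]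
    _ = (F ^ s) (G z) := hG _
  have hz : (F ^ s) ((F⁻¹ ^ s) z) = z := by
    rw [inv_pow, ← Equiv.Perm.mul_apply, mul_inv_cancel, Equiv.Perm.one_apply]
  have hinj : Function.Injective (F ^ s : Equiv.Perm X) := (F ^ s).injective
  have hsplit2 : ∀ y : X, (F ^ (2 * s)) y = (F ^ s) ((F ^ s) y) := by
    intro y
    rw [two_mul, pow_add, Equiv.Perm.mul_apply]
  have hsplit : ∀ y : X, (F ^ (2 * s + 1)) y = (F ^ s) (F ((F ^ s) y)) := by
    intro y
    rw [show 2 * s + 1 = (s + 1) + s by ring, pow_add, pow_succ,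
      Equiv.Perm.mul_apply, Equiv.Perm.mul_apply]
  constructor
  · rw [hkey]
    constructor
    · intro h
      apply hinj
      rw [hz, ← hsplit2]
      exact h
    · intro h
      rw [hsplit2, h, hz]
  · rw [hH, hkey]
    constructor
    · intro h
      apply hinj
      rw [hz, ← hsplit]
      exact h
    · intro h
      rw [hsplit, h, hz]
end

section
/- For each real m ≥ 1, let A_m = I(m+1, m, m+1) + I(m, m-1, m-1) for m ≥ 2, where I(a,b,c) = (π/4)·∫_{arccot(2a-1)}^{arccot(2b-1)} ((2c-1)tan η - 1)² (π/4 - η) dη. Then A_m = π²/(48 m⁴) + O(m⁻⁵) as m → ∞; in particular the series Σ_{m≥2} A_m converges. -/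
open MeasureTheory Filter

/-- Inverse cotangent with values in `(0, π/2)` for positive arguments. -/
noncomputable def arccot (x : ℝ) : ℝ := Real.pi / 2 - Real.arctan x

/-- `I(a,b,c) = (π/4)·∫_{arccot(2a-1)}^{arccot(2b-1)} ((2c-1)tan η - 1)² (π/4 - η) dη`. -/
noncomputable def Iarea (a b c : ℝ) : ℝ :=
  (Real.pi / 4) *
    ∫ η in arccot (2 * a - 1)..arccot (2 * b - 1),
      ((2 * c - 1) * Real.tan η - 1) ^ 2 * (Real.pi / 4 - η)

/-- `A_m = I(m+1,m,m+1) + I(m,m-1,m-1)`. -/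
noncomputable def Am (m : ℝ) : ℝ := Iarea (m + 1) m (m + 1) + Iarea m (m - 1) (m - 1)

open Real

lemma my_arctan_le_self {t : ℝ} (ht : 0 ≤ t) : arctan t ≤ t := by
  rcases eq_or_lt_of_le ht with h | h
  · simp [← h]
  · have h1 : 0 < arctan t := by
      have := Real.arctan_strictMono h
      rwa [arctan_zero] at this
    have h2 := Real.lt_tan h1 (arctan_lt_pi_div_two t)
    rw [tan_arctan] at h2
    linarith

lemma poly_int (K a b : ℝ) (hK : K ≠ 0) :
    ∫ t in a..b, (K * t - 1) ^ 2 = ((K * b - 1) ^ 3 - (K * a - 1) ^ 3) / (3 * K) := by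
  have h : ∀ t : ℝ, HasDerivAt (fun t => (K * t - 1) ^ 3 / (3 * K)) ((K * t - 1) ^ 2) t := by
    intro t
    have h1 : HasDerivAt (fun t : ℝ => (K * t - 1) ^ 3) (3 * (K * t - 1) ^ 2 * K) t := by
      have := (((hasDerivAt_id t).const_mul K).sub_const 1).pow 3
      refine this.congr_deriv ?_
      simp only [id]
      ring
    have := h1.div_const (3 * K)
    refine this.congr_deriv ?_
    field_simp
  rw [intervalIntegral.integral_eq_sub_of_hasDerivAt (fun t _ => h t)]
  · ring
  · exact (by fun_prop : Continuous fun t : ℝ => (K * t - 1) ^ 2).intervalIntegrable _ _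

lemma subst_lemma (p q K : ℝ) (hq : 1 ≤ q) (hpq : q ≤ p) :
    (∫ η in arccot p..arccot q, (K * Real.tan η - 1) ^ 2 * (Real.pi / 4 - η)) =
      ∫ t in p⁻¹..q⁻¹, (K * t - 1) ^ 2 * (Real.pi / 4 - Real.arctan t) / (1 + t ^ 2) := by
  have hp : 1 ≤ p := hq.trans hpq
  have hA0 : 0 < arccot p := by
    have := arctan_lt_pi_div_two p
    simp only [arccot]; linarith
  have hB : arccot q ≤ π / 4 := by
    have : π / 4 ≤ arctan q := by
      rw [← Real.arctan_one]
      exact arctan_strictMono.monotone hq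
    simp only [arccot]; linarith
  have hAB : arccot p ≤ arccot q := by
    have := arctan_strictMono.monotone hpq
    simp only [arccot]; linarith
  have hIcc : Set.uIcc (arccot p) (arccot q) = Set.Icc (arccot p) (arccot q) :=
    Set.uIcc_of_le hAB
  have hcos : ∀ x ∈ Set.uIcc (arccot p) (arccot q), 0 < Real.cos x := by
    intro x hx
    rw [hIcc] at hx
    have hpi := Real.pi_pos
    exact Real.cos_pos_of_mem_Ioo ⟨by linarith [hx.1], by linarith [hx.2]⟩
  set g : ℝ → ℝ := fun t => (K * t - 1) ^ 2 * (Real.pi / 4 - Real.arctan t) / (1 + t ^ 2) with hg_def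
  have hg : Continuous g := by
    apply Continuous.div
    · exact (by fun_prop : Continuous fun t : ℝ => (K * t - 1) ^ 2).mul
        (continuous_const.sub Real.continuous_arctan)
    · fun_prop
    · intro t; positivity
  have hder : ∀ x ∈ Set.uIcc (arccot p) (arccot q),
      HasDerivAt Real.tan (1 + Real.tan x ^ 2) x := by
    intro x hx
    have hc := (hcos x hx).ne'
    have := Real.hasDerivAt_tan hc
    convert this using 1
    rw [one_div, ← Real.inv_one_add_tan_sq hc, inv_inv]
  have hcont : ContinuousOn (fun x => 1 + Real.tan x ^ 2) (Set.uIcc (arccot p) (arccot q)) := by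
    intro x hx
    have h1 : ContinuousAt (fun x => 1 + Real.tan x ^ 2) x :=
      continuousAt_const.add ((Real.continuousAt_tan.mpr (hcos x hx).ne').pow 2)
    exact h1.continuousWithinAt
  have key := intervalIntegral.integral_comp_smul_deriv hder hcont hg
  have htanA : Real.tan (arccot p) = p⁻¹ := by
    rw [arccot, Real.tan_pi_div_two_sub, Real.tan_arctan]
  have htanB : Real.tan (arccot q) = q⁻¹ := by
    rw [arccot, Real.tan_pi_div_two_sub, Real.tan_arctan]
  rw [htanA, htanB] at key
  rw [← key]
  apply intervalIntegral.integral_congr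
  intro x hx
  have hc := hcos x hx
  have hx1 : -(π/2) < x := by
    rw [hIcc] at hx; have := Real.pi_pos; linarith [hx.1]
  have hx2 : x < π/2 := by
    rw [hIcc] at hx; have := Real.pi_pos; linarith [hx.2]
  simp only [smul_eq_mul, Function.comp, hg_def]
  rw [Real.arctan_tan hx1 hx2]
  have hne : 1 + Real.tan x ^ 2 ≠ 0 := by positivity
  field_simp

lemma key_est (p q K M : ℝ) (hq : 1 ≤ q) (hpq : q ≤ p) (hK : 0 < K) (hM0 : 0 ≤ M)
    (hM : ∀ t ∈ Set.Icc p⁻¹ q⁻¹, (K * t - 1) ^ 2 ≤ M) :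
    |(∫ t in p⁻¹..q⁻¹, (K * t - 1) ^ 2 * (Real.pi / 4 - Real.arctan t) / (1 + t ^ 2))
        - Real.pi / 4 * (((K * q⁻¹ - 1) ^ 3 - (K * p⁻¹ - 1) ^ 3) / (3 * K))|
      ≤ 2 * q⁻¹ * M * (q⁻¹ - p⁻¹) := by
  have hq0 : 0 < q := by linarith
  have hp0 : 0 < p := by linarith
  have hiq : 0 < q⁻¹ := by positivity
  have hip : 0 < p⁻¹ := by positivity
  have hinv : p⁻¹ ≤ q⁻¹ := by
    apply inv_anti₀ hq0 hpq
  have hq1 : q⁻¹ ≤ 1 := by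
    rw [inv_le_one_iff₀]; right; exact hq
  -- split integral
  have hgc : Continuous fun t : ℝ => (K * t - 1) ^ 2 * (Real.pi / 4 - Real.arctan t) / (1 + t ^ 2) := by
    apply Continuous.div
    · exact (by fun_prop : Continuous fun t : ℝ => (K * t - 1) ^ 2).mul
        (continuous_const.sub Real.continuous_arctan)
    · fun_prop
    · intro t; positivity
  have hmc : Continuous fun t : ℝ => Real.pi / 4 * (K * t - 1) ^ 2 := by fun_prop
  have hsub : (∫ t in p⁻¹..q⁻¹, (K * t - 1) ^ 2 * (Real.pi / 4 - Real.arctan t) / (1 + t ^ 2))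
        - Real.pi / 4 * (((K * q⁻¹ - 1) ^ 3 - (K * p⁻¹ - 1) ^ 3) / (3 * K))
      = ∫ t in p⁻¹..q⁻¹,
          ((K * t - 1) ^ 2 * (Real.pi / 4 - Real.arctan t) / (1 + t ^ 2)
            - Real.pi / 4 * (K * t - 1) ^ 2) := by
    rw [intervalIntegral.integral_sub (hgc.intervalIntegrable _ _) (hmc.intervalIntegrable _ _)]
    congr 1
    rw [intervalIntegral.integral_const_mul, poly_int K _ _ hK.ne']
  rw [hsub]
  have := intervalIntegral.norm_integral_le_of_norm_le_const
    (C := 2 * q⁻¹ * M)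
    (f := fun t => (K * t - 1) ^ 2 * (Real.pi / 4 - Real.arctan t) / (1 + t ^ 2)
            - Real.pi / 4 * (K * t - 1) ^ 2) (a := p⁻¹) (b := q⁻¹) ?_
  · rw [Real.norm_eq_abs] at this
    calc _ ≤ 2 * q⁻¹ * M * |q⁻¹ - p⁻¹| := this
    _ = 2 * q⁻¹ * M * (q⁻¹ - p⁻¹) := by rw [abs_of_nonneg (by linarith)]
  · intro t ht
    rw [Set.uIoc_of_le hinv] at ht
    obtain ⟨ht1, ht2⟩ := ht
    have ht0 : 0 < t := lt_trans hip ht1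
    have htle : t ≤ 1 := le_trans ht2 hq1
    have hMt : (K * t - 1) ^ 2 ≤ M := hM t ⟨ht1.le, ht2⟩
    have harc : Real.arctan t ≤ t := my_arctan_le_self ht0.le
    have harc0 : 0 ≤ Real.arctan t := by
      rw [← Real.arctan_zero]; exact Real.arctan_strictMono.monotone ht0.le
    have hden : (0:ℝ) < 1 + t ^ 2 := by positivity
    have hpi : Real.pi ≤ 4 := by linarith [Real.pi_lt_d2]
    have hpi0 : 0 < Real.pi := Real.pi_pos
    rw [Real.norm_eq_abs]
    show |(K * t - 1) ^ 2 * (Real.pi / 4 - Real.arctan t) / (1 + t ^ 2) - Real.pi / 4 * (K * t - 1) ^ 2| ≤ 2 * q⁻¹ * M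
    have heq : (K * t - 1) ^ 2 * (Real.pi / 4 - Real.arctan t) / (1 + t ^ 2)
            - Real.pi / 4 * (K * t - 1) ^ 2
          = (K * t - 1) ^ 2 * (-(Real.arctan t + Real.pi / 4 * t ^ 2) / (1 + t ^ 2)) := by
      field_simp
      ring
    rw [heq, abs_mul, abs_of_nonneg (by positivity : (0:ℝ) ≤ (K * t - 1) ^ 2)]
    have hr : |(-(Real.arctan t + Real.pi / 4 * t ^ 2) / (1 + t ^ 2))| ≤ 2 * q⁻¹ := by
      rw [abs_div, abs_neg, abs_of_nonneg (by positivity), abs_of_nonneg (by positivity)]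
      rw [div_le_iff₀ hden]
      have h1 : Real.pi / 4 * t ^ 2 ≤ t := by nlinarith
      have h2 : t ≤ q⁻¹ := ht2
      nlinarith
    calc (K * t - 1) ^ 2 * |(-(Real.arctan t + Real.pi / 4 * t ^ 2) / (1 + t ^ 2))|
        ≤ M * (2 * q⁻¹) := by
          apply mul_le_mul hMt hr (abs_nonneg _) hM0
    _ = 2 * q⁻¹ * M := by ring

set_option maxHeartbeats 1000000 in
lemma main_bound (m : ℝ) (hm : 2 ≤ m) :
    |Am m - Real.pi ^ 2 / (48 * m ^ 4)| ≤ 100 / m ^ 5 := by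
  have hm0 : (0:ℝ) < m := by linarith
  have h1 : (0:ℝ) < 2 * m - 3 := by linarith
  have h2 : (0:ℝ) < 2 * m - 1 := by linarith
  have h3 : (0:ℝ) < 2 * m + 1 := by linarith
  have h1' : (2*m-3) ≠ 0 := h1.ne'
  have h2' : (2*m-1) ≠ 0 := h2.ne'
  have h3' : (2*m+1) ≠ 0 := h3.ne'
  have hpi : Real.pi ≤ 4 := by linarith [Real.pi_lt_d2]
  have hpi0 : 0 < Real.pi := Real.pi_pos
  have hpisq : Real.pi ^ 2 ≤ 10 := by nlinarith [Real.pi_lt_d2, Real.pi_gt_three]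
  -- rewrite the two Iarea terms via substitution
  have e1 : Iarea (m+1) m (m+1) = Real.pi / 4 *
      ∫ t in (2*m+1)⁻¹..(2*m-1)⁻¹,
        ((2*m+1) * t - 1) ^ 2 * (Real.pi / 4 - Real.arctan t) / (1 + t ^ 2) := by
    rw [Iarea, show 2*(m+1)-1 = 2*m+1 by ring,
      subst_lemma (2*m+1) (2*m-1) (2*m+1) (by linarith) (by linarith)]
  have e2 : Iarea m (m-1) (m-1) = Real.pi / 4 *
      ∫ t in (2*m-1)⁻¹..(2*m-3)⁻¹,
        ((2*m-3) * t - 1) ^ 2 * (Real.pi / 4 - Real.arctan t) / (1 + t ^ 2) := by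
    rw [Iarea, show 2*(m-1)-1 = 2*m-3 by ring,
      subst_lemma (2*m-1) (2*m-3) (2*m-3) (by linarith) (by linarith)]
  -- M bounds
  have hM1 : ∀ t ∈ Set.Icc (2*m+1)⁻¹ (2*m-1)⁻¹, ((2*m+1) * t - 1) ^ 2 ≤ 4/(2*m-1)^2 := by
    intro t ht
    have ha := mul_le_mul_of_nonneg_left ht.1 h3.le
    have hb := mul_le_mul_of_nonneg_left ht.2 h3.le
    rw [mul_inv_cancel₀ h3'] at ha
    have hub : (2*m+1) * (2*m-1)⁻¹ - 1 = 2/(2*m-1) := by field_simp; ring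
    have hsq := sq_le_sq' (by linarith [div_nonneg (by norm_num : (0:ℝ) ≤ 2) h2.le] :
        -(2/(2*m-1)) ≤ (2*m+1) * t - 1) (by linarith : (2*m+1) * t - 1 ≤ 2/(2*m-1))
    calc ((2*m+1) * t - 1) ^ 2 ≤ (2/(2*m-1)) ^ 2 := hsq
    _ = 4/(2*m-1)^2 := by rw [div_pow]; norm_num
  have hM2 : ∀ t ∈ Set.Icc (2*m-1)⁻¹ (2*m-3)⁻¹, ((2*m-3) * t - 1) ^ 2 ≤ 4/(2*m-1)^2 := by
    intro t ht
    have ha := mul_le_mul_of_nonneg_left ht.1 h1.le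
    have hb := mul_le_mul_of_nonneg_left ht.2 h1.le
    rw [mul_inv_cancel₀ h1'] at hb
    have hlb : (2*m-3) * (2*m-1)⁻¹ - 1 = -(2/(2*m-1)) := by field_simp; ring
    have hsq := sq_le_sq' (by linarith : -(2/(2*m-1)) ≤ (2*m-3) * t - 1)
      (by linarith [div_nonneg (by norm_num : (0:ℝ) ≤ 2) h2.le] :
        (2*m-3) * t - 1 ≤ 2/(2*m-1))
    calc ((2*m-3) * t - 1) ^ 2 ≤ (2/(2*m-1)) ^ 2 := hsq
    _ = 4/(2*m-1)^2 := by rw [div_pow]; norm_num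
  have hMnn : (0:ℝ) ≤ 4/(2*m-1)^2 := by positivity
  -- key estimates
  have k1 := key_est (2*m+1) (2*m-1) (2*m+1) (4/(2*m-1)^2) (by linarith) (by linarith)
    (by linarith) hMnn hM1
  have k2 := key_est (2*m-1) (2*m-3) (2*m-3) (4/(2*m-1)^2) (by linarith) (by linarith)
    (by linarith) hMnn hM2
  -- closed forms for the main terms
  have hE1 : ((2*m+1) * (2*m-1)⁻¹ - 1) ^ 3 - ((2*m+1) * (2*m+1)⁻¹ - 1) ^ 3 = 8/(2*m-1)^3 := by
    rw [mul_inv_cancel₀ h3']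
    have : (2*m+1) * (2*m-1)⁻¹ - 1 = 2/(2*m-1) := by field_simp; ring
    rw [this]
    rw [div_pow]
    norm_num
  have hE2 : ((2*m-3) * (2*m-3)⁻¹ - 1) ^ 3 - ((2*m-3) * (2*m-1)⁻¹ - 1) ^ 3 = 8/(2*m-1)^3 := by
    rw [mul_inv_cancel₀ h1']
    have : (2*m-3) * (2*m-1)⁻¹ - 1 = -(2/(2*m-1)) := by field_simp; ring
    rw [this]
    simp only [sub_self, ne_eq]
    rw [neg_pow, div_pow]
    norm_num
  rw [hE1] at k1
  rw [hE2] at k2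
  -- abs bounds for the Iarea terms
  set a1 : ℝ := Real.pi / 4 * (Real.pi / 4 * (8/(2*m-1)^3 / (3 * (2*m+1)))) with ha1
  set a2 : ℝ := Real.pi / 4 * (Real.pi / 4 * (8/(2*m-1)^3 / (3 * (2*m-3)))) with ha2
  have b1 : |Iarea (m+1) m (m+1) - a1| ≤
      Real.pi / 4 * (2 * (2*m-1)⁻¹ * (4/(2*m-1)^2) * ((2*m-1)⁻¹ - (2*m+1)⁻¹)) := by
    have : Iarea (m+1) m (m+1) - a1 = Real.pi / 4 *
        ((∫ t in (2*m+1)⁻¹..(2*m-1)⁻¹,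
          ((2*m+1) * t - 1) ^ 2 * (Real.pi / 4 - Real.arctan t) / (1 + t ^ 2))
          - Real.pi / 4 * (8/(2*m-1)^3 / (3 * (2*m+1)))) := by
      rw [e1, ha1]; ring
    rw [this, abs_mul, abs_of_nonneg (by positivity : (0:ℝ) ≤ Real.pi / 4)]
    exact mul_le_mul_of_nonneg_left k1 (by positivity)
  have b2 : |Iarea m (m-1) (m-1) - a2| ≤
      Real.pi / 4 * (2 * (2*m-3)⁻¹ * (4/(2*m-1)^2) * ((2*m-3)⁻¹ - (2*m-1)⁻¹)) := by
    have : Iarea m (m-1) (m-1) - a2 = Real.pi / 4 *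
        ((∫ t in (2*m-1)⁻¹..(2*m-3)⁻¹,
          ((2*m-3) * t - 1) ^ 2 * (Real.pi / 4 - Real.arctan t) / (1 + t ^ 2))
          - Real.pi / 4 * (8/(2*m-1)^3 / (3 * (2*m-3)))) := by
      rw [e2, ha2]; ring
    rw [this, abs_mul, abs_of_nonneg (by positivity : (0:ℝ) ≤ Real.pi / 4)]
    exact mul_le_mul_of_nonneg_left k2 (by positivity)
  -- numeric bounds on error terms
  have hpow4 : m ^ 4 ≤ (2*m-1) ^ 4 := pow_le_pow_left₀ hm0.le (by linarith) 4
  have hpow3 : m ^ 3 ≤ (2*m-1) ^ 3 := pow_le_pow_left₀ hm0.le (by linarith) 3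
  have hpow2 : (m/2) ^ 2 ≤ (2*m-3) ^ 2 := pow_le_pow_left₀ (by positivity) (by linarith) 2
  have err1 : Real.pi / 4 * (2 * (2*m-1)⁻¹ * (4/(2*m-1)^2) * ((2*m-1)⁻¹ - (2*m+1)⁻¹))
      ≤ 16 / m ^ 5 := by
    have heq : Real.pi / 4 * (2 * (2*m-1)⁻¹ * (4/(2*m-1)^2) * ((2*m-1)⁻¹ - (2*m+1)⁻¹))
        = 4 * Real.pi / ((2*m-1)^4 * (2*m+1)) := by
      field_simp
      ring
    rw [heq]
    apply div_le_div₀ (by norm_num) (by linarith) (by positivity)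
    calc m ^ 5 = m ^ 4 * m := by ring
    _ ≤ (2*m-1)^4 * (2*m+1) := by
        apply mul_le_mul hpow4 (by linarith) hm0.le (by positivity)
  have err2 : Real.pi / 4 * (2 * (2*m-3)⁻¹ * (4/(2*m-1)^2) * ((2*m-3)⁻¹ - (2*m-1)⁻¹))
      ≤ 64 / m ^ 5 := by
    have heq : Real.pi / 4 * (2 * (2*m-3)⁻¹ * (4/(2*m-1)^2) * ((2*m-3)⁻¹ - (2*m-1)⁻¹))
        = 4 * Real.pi / ((2*m-3)^2 * (2*m-1)^3) := by
      field_simp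
      ring
    rw [heq]
    have h64 : (64:ℝ) / m ^ 5 = 16 / (m^5/4) := by field_simp; ring
    rw [h64]
    apply div_le_div₀ (by norm_num) (by linarith) (by positivity)
    calc m ^ 5 / 4 = (m/2)^2 * m ^ 3 := by ring
    _ ≤ (2*m-3)^2 * (2*m-1)^3 := by
        apply mul_le_mul hpow2 hpow3 (by positivity) (by positivity)
  -- third term
  have t3 : |a1 + a2 - Real.pi ^ 2 / (48 * m ^ 4)| ≤ 14 / m ^ 5 := by
    have heq : a1 + a2 - Real.pi ^ 2 / (48 * m ^ 4)
        = Real.pi ^ 2 * (96*m^3 - 24*m^2 - 24*m + 9)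
          / (144 * m ^ 4 * ((2*m-1)^2 * (2*m+1) * (2*m-3))) := by
      rw [ha1, ha2]
      rw [eq_div_iff (by positivity)]
      field_simp
      ring
    rw [heq]
    have hN0 : (0:ℝ) ≤ 96*m^3 - 24*m^2 - 24*m + 9 := by nlinarith
    have hD0 : (0:ℝ) < 144 * m ^ 4 * ((2*m-1)^2 * (2*m+1) * (2*m-3)) := by positivity
    rw [abs_of_nonneg (div_nonneg (mul_nonneg (sq_nonneg _) hN0) hD0.le)]
    have hnum : Real.pi ^ 2 * (96*m^3 - 24*m^2 - 24*m + 9) ≤ 960 * m ^ 3 := by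
      nlinarith [sq_nonneg Real.pi]
    have hden : 72 * m ^ 8 ≤ 144 * m ^ 4 * ((2*m-1)^2 * (2*m+1) * (2*m-3)) := by
      have hA : m ^ 2 ≤ (2*m-1)^2 := pow_le_pow_left₀ hm0.le (by linarith) 2
      nlinarith [pow_pos hm0 4, pow_pos hm0 2, mul_pos (pow_pos hm0 2) h3,
        mul_le_mul hA (by linarith : m ≤ 2*m+1) hm0.le (by positivity),
        mul_le_mul (mul_le_mul hA (by linarith : m ≤ 2*m+1) hm0.le (by positivity))
          (by linarith : m/2 ≤ 2*m-3) (by positivity) (by positivity)]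
    calc Real.pi ^ 2 * (96*m^3 - 24*m^2 - 24*m + 9)
          / (144 * m ^ 4 * ((2*m-1)^2 * (2*m+1) * (2*m-3)))
        ≤ 960 * m ^ 3 / (72 * m ^ 8) := by
          apply div_le_div₀ (by positivity) hnum (by positivity) hden
    _ ≤ 14 / m ^ 5 := by
        rw [div_le_div_iff₀ (by positivity) (by positivity)]
        nlinarith [pow_pos hm0 8]
  -- assemble
  have hsplit : Am m - Real.pi ^ 2 / (48 * m ^ 4)
      = (Iarea (m+1) m (m+1) - a1) + (Iarea m (m-1) (m-1) - a2)
        + (a1 + a2 - Real.pi ^ 2 / (48 * m ^ 4)) := by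
    rw [Am]; ring
  rw [hsplit]
  calc |(Iarea (m+1) m (m+1) - a1) + (Iarea m (m-1) (m-1) - a2)
        + (a1 + a2 - Real.pi ^ 2 / (48 * m ^ 4))|
      ≤ |(Iarea (m+1) m (m+1) - a1) + (Iarea m (m-1) (m-1) - a2)|
        + |a1 + a2 - Real.pi ^ 2 / (48 * m ^ 4)| := abs_add_le _ _
    _ ≤ |Iarea (m+1) m (m+1) - a1| + |Iarea m (m-1) (m-1) - a2|
        + |a1 + a2 - Real.pi ^ 2 / (48 * m ^ 4)| := by
          linarith [abs_add_le (Iarea (m+1) m (m+1) - a1) (Iarea m (m-1) (m-1) - a2)]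
    _ ≤ 16 / m ^ 5 + 64 / m ^ 5 + 14 / m ^ 5 := by
          have c1 := b1.trans err1
          have c2 := b2.trans err2
          linarith
    _ ≤ 100 / m ^ 5 := by
          rw [← add_div, ← add_div]
          apply div_le_div_of_nonneg_right ?_ (by positivity)
          norm_num

/-- `A_m = π²/(48 m⁴) + O(m⁻⁵)` as `m → ∞`; in particular `Σ_{m ≥ 2} A_m` converges. -/
theorem stmt18 :
    Asymptotics.IsBigO atTop
      (fun m : ℝ => Am m - Real.pi ^ 2 / (48 * m ^ 4))
      (fun m : ℝ => m ^ (-5 : ℤ)) ∧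
    Summable (fun k : ℕ => Am (k + 2)) := by
  constructor
  · rw [Asymptotics.isBigO_iff]
    refine ⟨100, ?_⟩
    filter_upwards [eventually_ge_atTop (2:ℝ)] with m hm
    have hb := main_bound m hm
    have hm0 : (0:ℝ) < m := by linarith
    rw [Real.norm_eq_abs, Real.norm_eq_abs]
    have hz : |m ^ (-5:ℤ)| = 1 / m ^ 5 := by
      have h5 : m ^ (-5:ℤ) = 1 / m ^ 5 := by
        rw [zpow_neg, one_div, ← zpow_natCast m 5]
        norm_num
      rw [h5, abs_of_nonneg (by positivity)]
    rw [hz]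
    calc |Am m - Real.pi ^ 2 / (48 * m ^ 4)| ≤ 100 / m ^ 5 := hb
    _ = 100 * (1 / m ^ 5) := by ring
  · apply Summable.of_norm_bounded (g := fun k : ℕ => 101 * (1 / ((k:ℝ) + 2) ^ 4))
    · apply Summable.mul_left
      have h4 : Summable (fun n : ℕ => 1 / (n:ℝ) ^ 4) :=
        Real.summable_one_div_nat_pow.mpr (by norm_num)
      have := (summable_nat_add_iff 2).mpr h4
      apply this.congr
      intro k
      push_cast
      ring
    · intro k
      have hk : (2:ℝ) ≤ (k:ℝ) + 2 := by linarith [Nat.cast_nonneg (α := ℝ) k]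
      have hk0 : (0:ℝ) < (k:ℝ) + 2 := by positivity
      have hb := main_bound ((k:ℝ) + 2) hk
      have hpisq : Real.pi ^ 2 ≤ 16 := by nlinarith [Real.pi_le_four, Real.pi_pos]
      rw [Real.norm_eq_abs]
      have h1 : |Am ((k:ℝ) + 2)| ≤ 100 / ((k:ℝ)+2) ^ 5 + Real.pi ^ 2 / (48 * ((k:ℝ)+2) ^ 4) := by
        have := abs_sub_abs_le_abs_sub (Am ((k:ℝ)+2)) (Real.pi ^ 2 / (48 * ((k:ℝ)+2) ^ 4))
        have habs : |Real.pi ^ 2 / (48 * ((k:ℝ)+2) ^ 4)| = Real.pi ^ 2 / (48 * ((k:ℝ)+2) ^ 4) :=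
          abs_of_nonneg (by positivity)
        calc |Am ((k:ℝ) + 2)| ≤ |Am ((k:ℝ)+2) - Real.pi ^ 2 / (48 * ((k:ℝ)+2) ^ 4)|
              + |Real.pi ^ 2 / (48 * ((k:ℝ)+2) ^ 4)| := by
              have := abs_add_le (Am ((k:ℝ)+2) - Real.pi ^ 2 / (48 * ((k:ℝ)+2) ^ 4))
                (Real.pi ^ 2 / (48 * ((k:ℝ)+2) ^ 4))
              simpa using this
          _ ≤ 100 / ((k:ℝ)+2) ^ 5 + Real.pi ^ 2 / (48 * ((k:ℝ)+2) ^ 4) := by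
              rw [habs]; linarith
      calc |Am ((k:ℝ) + 2)| ≤ 100 / ((k:ℝ)+2) ^ 5 + Real.pi ^ 2 / (48 * ((k:ℝ)+2) ^ 4) := h1
        _ ≤ 100 / ((k:ℝ)+2) ^ 4 + 1 / ((k:ℝ)+2) ^ 4 := by
            apply add_le_add
            · apply div_le_div₀ (by norm_num) (le_refl _) (by positivity)
              apply pow_le_pow_right₀ (by linarith) (by norm_num)
            · rw [div_le_div_iff₀ (by positivity) (by positivity)]
              nlinarith [pow_pos hk0 4]
        _ = 101 * (1 / ((k:ℝ) + 2) ^ 4) := by ring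
end
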